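/- If a flow X has the two-sided limit shadowing property with gap N in an isolated invariant set Λ, then for every x, y ∈ Λ there exists K ∈ ℝ with |K| ≤ N such that the stable set of X_{−K}(x) intersects the unstable set of y, i.e., W^s(X_{−K}(x)) ∩ W^u(y) ≠ ∅. -/

import Mathlib

open Filter Topology MeasureTheory Set

variable {M : Type*} [MetricSpace M]

/-- `X` is a continuous flow on `M`. -/
def IsFlow (X : ℝ → M → M) : Prop :=
  Continuous (fun p : ℝ × M => X p.1 p.2) ∧ (∀ x, X 0 x = x) ∧
    ∀ s t : ℝ, ∀ x, X (s + t) x = X s (X t x)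

/-- `Λ` is invariant under the flow `X`. -/
def InvariantSet (X : ℝ → M → M) (Λ : Set M) : Prop := ∀ t : ℝ, X t '' Λ = Λ

/-- `Λ` is an isolated invariant set for `X`. -/
def IsolatedSet (X : ℝ → M → M) (Λ : Set M) : Prop :=
  InvariantSet X Λ ∧ ∃ U : Set M, IsOpen U ∧ Λ = ⋂ t : ℝ, X t '' U

/-- An orientation preserving homeomorphism of `ℝ` fixing `0`. -/
def OrientHomeo (h : ℝ → ℝ) : Prop :=
  Continuous h ∧ StrictMono h ∧ Function.Bijective h ∧ h 0 = 0

/-- Two-sided partial sums: `psumZ t n = s_n = ∑_{i=0}^{n-1} t i` for `n ≥ 0` and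
`psumZ t (-n) = -∑_{i=-n}^{-1} t i` for `n > 0`. -/
noncomputable def psumZ (t : ℤ → ℝ) : ℤ → ℝ := fun n =>
  if 0 ≤ n then ∑ i ∈ Finset.range n.toNat, t (i : ℤ)
  else -∑ i ∈ Finset.range (-n).toNat, t (n + (i : ℤ))

/-- One-sided partial sums. -/
noncomputable def psumN (t : ℕ → ℝ) : ℕ → ℝ := fun n => ∑ i ∈ Finset.range n, t i

/-- The omega-limit set of `x` under the flow `X`. -/
noncomputable def omegaSet (X : ℝ → M → M) (x : M) : Set M :=
  ⋂ T : ℝ, closure ((fun t : ℝ => X t x) '' Set.Ici T)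

/-- The basin of `A`. -/
def basin (X : ℝ → M → M) (A : Set M) : Set M := {x | omegaSet X x ⊆ A}

/-- `A` is an attracting set for the flow `X`. -/
def IsAttracting (X : ℝ → M → M) (A : Set M) : Prop :=
  ∃ U : Set M, IsOpen U ∧ (∀ t : ℝ, 0 < t → X t '' closure U ⊆ U) ∧
    A = ⋂ t ∈ Set.Ici (0 : ℝ), X t '' closure U

/-- `X` is topologically transitive in `Λ`. -/
def TopTransOn (X : ℝ → M → M) (Λ : Set M) : Prop :=
  ∀ U V : Set M, IsOpen U → IsOpen V → (U ∩ Λ).Nonempty → (V ∩ Λ).Nonempty →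
    ∃ t : ℝ, (X t '' (U ∩ Λ) ∩ (V ∩ Λ)).Nonempty

/-- An attractor is a transitive attracting set. -/
def IsAttractor (X : ℝ → M → M) (A : Set M) : Prop := IsAttracting X A ∧ TopTransOn X A

/-- A proper attractor: `∅ ≠ A ⊆ B(A) ⊊ M`. -/
def IsProperAttractor (X : ℝ → M → M) (A : Set M) : Prop :=
  IsAttractor X A ∧ A.Nonempty ∧ A ⊆ basin X A ∧ basin X A ≠ Set.univ

/-- The stable set of `p`. -/
def stableSet (X : ℝ → M → M) (p : M) : Set M :=
  {q | Tendsto (fun s : ℝ => dist (X s p) (X s q)) atTop (𝓝 0)}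

/-- The unstable set of `p`. -/
def unstableSet (X : ℝ → M → M) (p : M) : Set M :=
  {q | Tendsto (fun s : ℝ => dist (X (-s) p) (X (-s) q)) atTop (𝓝 0)}

/-- `X` is chain transitive in `Λ`. -/
def ChainTransitive (X : ℝ → M → M) (Λ : Set M) : Prop :=
  ∀ x ∈ Λ, ∀ y ∈ Λ, ∀ δ : ℝ, 0 < δ → ∃ K : ℕ, ∃ xs : ℕ → M, ∃ ts : ℕ → ℝ,
    xs 0 = x ∧ xs K = y ∧ (∀ i, i ≤ K → xs i ∈ Λ) ∧ (∀ i, i < K → 1 ≤ ts i) ∧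
    ∀ i, i < K → dist (X (ts i) (xs i)) (xs (i + 1)) < δ

/-- `X` has the shadowing property in `Λ`. -/
def ShadowingProp (X : ℝ → M → M) (Λ : Set M) : Prop :=
  ∀ ε : ℝ, 0 < ε → ∃ δ : ℝ, 0 < δ ∧ ∀ x : ℤ → M, ∀ t : ℤ → ℝ,
    (∀ i, x i ∈ Λ) → (∀ i, 1 ≤ t i) → (∀ i, dist (X (t i) (x i)) (x (i + 1)) < δ) →
    ∃ z ∈ Λ, ∃ h : ℝ → ℝ, OrientHomeo h ∧
      ∀ i : ℤ, ∀ τ : ℝ, psumZ t i ≤ τ → τ ≤ psumZ t (i + 1) →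
        dist (X (h τ) z) (X (τ - psumZ t i) (x i)) < ε

/-- A two-sided limit-pseudo orbit: `t i ≥ 1` and `d(X_{t_i}(x_i), x_{i+1}) → 0` as `|i| → ∞`. -/
def TwoSidedLimitPseudoOrbit (X : ℝ → M → M) (x : ℤ → M) (t : ℤ → ℝ) : Prop :=
  (∀ i, 1 ≤ t i) ∧ Tendsto (fun i : ℤ => dist (X (t i) (x i)) (x (i + 1))) cofinite (𝓝 0)

/-- The positive shadowing integral over the `i`-th time block. -/
noncomputable def posLimIntegral (X : ℝ → M → M) (x : ℤ → M) (t : ℤ → ℝ) (z : M)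
    (h : ℝ → ℝ) (i : ℤ) : ℝ :=
  ∫ τ in psumZ t i..psumZ t (i + 1), dist (X (h τ) z) (X (τ - psumZ t i) (x i))

/-- The pseudo orbit `(x, t)` is limit shadowed by `z` with gap `K`. -/
def LimitShadowedWithGap (X : ℝ → M → M) (x : ℤ → M) (t : ℤ → ℝ) (z : M) (K : ℝ) : Prop :=
  Tendsto (fun i : ℕ =>
      ∫ τ in psumZ t i..psumZ t ((i : ℤ) + 1),
        dist (X (τ + K) z) (X (τ - psumZ t i) (x i))) atTop (𝓝 0) ∧
  Tendsto (fun i : ℕ =>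
      ∫ τ in psumZ t (-(i : ℤ))..psumZ t (-(i : ℤ) + 1),
        dist (X τ z) (X (τ - psumZ t (-(i : ℤ))) (x (-(i : ℤ))))) atTop (𝓝 0)

/-- `X` has the (two-sided) limit shadowing property with gap `N` in `Λ`. -/
def TwoSidedLimitShadowingWithGap (X : ℝ → M → M) (Λ : Set M) (N : ℝ) : Prop :=
  ∀ x : ℤ → M, ∀ t : ℤ → ℝ, (∀ i, x i ∈ Λ) → TwoSidedLimitPseudoOrbit X x t →
    ∃ z ∈ Λ, ∃ K : ℝ, |K| ≤ N ∧ LimitShadowedWithGap X x t z K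

/-- `X` has the positive limit shadowing property in `Λ`. -/
def PosLimitShadowing (X : ℝ → M → M) (Λ : Set M) : Prop :=
  ∀ x : ℕ → M, ∀ t : ℕ → ℝ, (∀ i, x i ∈ Λ) → (∀ i, 1 ≤ t i) →
    Tendsto (fun i : ℕ => dist (X (t i) (x i)) (x (i + 1))) atTop (𝓝 0) →
    ∃ z ∈ Λ, ∃ h : ℝ → ℝ, OrientHomeo h ∧
      Tendsto (fun i : ℕ =>
          ∫ τ in psumN t i..psumN t (i + 1),
            dist (X (h τ) z) (X (τ - psumN t i) (x i))) atTop (𝓝 0)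

/-- `X` has the (two-sided) limit shadowing property in `Λ`. -/
def LimitShadowing (X : ℝ → M → M) (Λ : Set M) : Prop :=
  ∀ x : ℤ → M, ∀ t : ℤ → ℝ, (∀ i, x i ∈ Λ) → TwoSidedLimitPseudoOrbit X x t →
    ∃ z ∈ Λ, ∃ h : ℝ → ℝ, OrientHomeo h ∧
      Tendsto (fun i : ℕ => posLimIntegral X x t z h i) atTop (𝓝 0) ∧
      Tendsto (fun i : ℕ =>
          ∫ τ in psumZ t (-(i : ℤ))..psumZ t (-(i : ℤ) + 1),
            dist (X (h τ) z) (X (τ - psumZ t (-(i : ℤ))) (x (-(i : ℤ))))) atTop (𝓝 0)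

/-- A `δ`-average-pseudo orbit. -/
def AvgPseudoOrbit (X : ℝ → M → M) (x : ℤ → M) (t : ℤ → ℝ) (δ : ℝ) : Prop :=
  (∀ i, 1 ≤ t i) ∧ ∃ N : ℕ, 0 < N ∧ ∀ n : ℕ, N ≤ n → ∀ k : ℤ,
    (1 / (n : ℝ)) * ∑ i ∈ Finset.Icc 1 n,
      dist (X (t ((i : ℤ) + k)) (x ((i : ℤ) + k))) (x ((i : ℤ) + k + 1)) < δ

/-- Positive Cesàro averages of shadowing integrals. -/
noncomputable def avgPosSeq (X : ℝ → M → M) (x : ℤ → M) (t : ℤ → ℝ) (z : M)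
    (h : ℝ → ℝ) (n : ℕ) : ℝ :=
  (1 / (n : ℝ)) * ∑ i ∈ Finset.Icc 1 n,
    ∫ τ in psumZ t i..psumZ t ((i : ℤ) + 1), dist (X (h τ) z) (X (τ - psumZ t i) (x i))

/-- Negative Cesàro averages of shadowing integrals. -/
noncomputable def avgNegSeq (X : ℝ → M → M) (x : ℤ → M) (t : ℤ → ℝ) (z : M)
    (h : ℝ → ℝ) (n : ℕ) : ℝ :=
  (1 / (n : ℝ)) * ∑ i ∈ Finset.Icc 1 n,
    ∫ τ in psumZ t (-(i : ℤ))..psumZ t (-(i : ℤ) + 1),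
      dist (X (h τ) z) (X (τ - psumZ t (-(i : ℤ))) (x (-(i : ℤ))))

/-- `X` has the average shadowing property in `Λ`. -/
def AvgShadowing (X : ℝ → M → M) (Λ : Set M) : Prop :=
  ∀ ε : ℝ, 0 < ε → ∃ δ : ℝ, 0 < δ ∧ ∀ x : ℤ → M, ∀ t : ℤ → ℝ,
    (∀ i, x i ∈ Λ) → AvgPseudoOrbit X x t δ →
    ∃ z ∈ Λ, ∃ h : ℝ → ℝ, OrientHomeo h ∧
      limsup (avgPosSeq X x t z h) atTop < ε ∧ limsup (avgNegSeq X x t z h) atTop < ε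

/-- An asymptotic average-pseudo orbit. -/
def AsympAvgPseudoOrbit (X : ℝ → M → M) (x : ℤ → M) (t : ℤ → ℝ) : Prop :=
  (∀ i, 1 ≤ t i) ∧ Tendsto (fun n : ℕ =>
    (1 / (n : ℝ)) * ∑ i ∈ Finset.Icc (-(n : ℤ)) (n : ℤ), dist (X (t i) (x i)) (x (i + 1)))
    atTop (𝓝 0)

/-- Positive Cesàro averages (`i = 0, …, n`) of shadowing integrals. -/
noncomputable def asympPosSeq (X : ℝ → M → M) (x : ℤ → M) (t : ℤ → ℝ) (z : M)
    (h : ℝ → ℝ) (n : ℕ) : ℝ :=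
  (1 / (n : ℝ)) * ∑ i ∈ Finset.range (n + 1),
    ∫ τ in psumZ t i..psumZ t ((i : ℤ) + 1), dist (X (h τ) z) (X (τ - psumZ t i) (x i))

/-- Negative Cesàro averages (`i = 0, …, n`) of shadowing integrals. -/
noncomputable def asympNegSeq (X : ℝ → M → M) (x : ℤ → M) (t : ℤ → ℝ) (z : M)
    (h : ℝ → ℝ) (n : ℕ) : ℝ :=
  (1 / (n : ℝ)) * ∑ i ∈ Finset.range (n + 1),
    ∫ τ in psumZ t (-(i : ℤ))..psumZ t (-(i : ℤ) + 1),
      dist (X (h τ) z) (X (τ - psumZ t (-(i : ℤ))) (x (-(i : ℤ))))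

/-- `X` has the asymptotic average shadowing property in `Λ`. -/
def AsympAvgShadowing (X : ℝ → M → M) (Λ : Set M) : Prop :=
  ∀ x : ℤ → M, ∀ t : ℤ → ℝ, (∀ i, x i ∈ Λ) → AsympAvgPseudoOrbit X x t →
    ∃ z ∈ Λ, ∃ h : ℝ → ℝ, OrientHomeo h ∧
      Tendsto (asympPosSeq X x t z h) atTop (𝓝 0) ∧
      Tendsto (asympNegSeq X x t z h) atTop (𝓝 0)

/-- A critical orbit: the orbit of a periodic point or a singularity. -/
def IsCriticalOrbit (X : ℝ → M → M) (C : Set M) : Prop :=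
  ∃ p : M, (∃ T : ℝ, 0 < T ∧ X T p = p) ∧ C = Set.range fun s : ℝ => X s p

section AuxGap

lemma unif_small' [CompactSpace M] {X : ℝ → M → M} (hX : IsFlow X) {ε : ℝ} (hε : 0 < ε) :
    ∃ δ : ℝ, 0 < δ ∧ δ ≤ 1 ∧ ∀ s : ℝ, |s| ≤ δ → ∀ w : M, dist (X s w) w < ε := by
  set Φ : ℝ × M → ℝ := fun p => dist (X p.1 p.2) p.2 with hΦ
  have hΦc : Continuous Φ := hX.1.dist continuous_snd
  set S : Set (ℝ × M) := {p | p.1 ∈ Set.Icc (-1:ℝ) 1 ∧ ε ≤ Φ p} with hS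
  have hScl : IsClosed S := by
    have : S = (Prod.fst ⁻¹' Set.Icc (-1:ℝ) 1) ∩ {p | ε ≤ Φ p} := rfl
    rw [this]
    exact (isClosed_Icc.preimage continuous_fst).inter (isClosed_le continuous_const hΦc)
  have hScpt : IsCompact S := by
    refine IsCompact.of_isClosed_subset
      ((isCompact_Icc (a := (-1:ℝ)) (b := 1)).prod isCompact_univ) hScl ?_
    intro p hp; exact ⟨hp.1, trivial⟩
  have hTcpt : IsCompact (Prod.fst '' S) := hScpt.image continuous_fst
  have h0T : (0:ℝ) ∉ Prod.fst '' S := by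
    rintro ⟨⟨s, w⟩, hsw, hfst⟩
    have hs0 : s = 0 := hfst
    have hs2 : ε ≤ Φ (s, w) := hsw.2
    rw [hs0] at hs2
    simp only [hΦ] at hs2
    rw [hX.2.1] at hs2
    simp at hs2; linarith
  have hopen : IsOpen (Prod.fst '' S)ᶜ := hTcpt.isClosed.isOpen_compl
  obtain ⟨δ, hδ0, hδ⟩ := Metric.isOpen_iff.mp hopen 0 h0T
  refine ⟨min (δ/2) 1, by positivity, min_le_right _ _, fun s hs w => ?_⟩
  have hs1 : |s| ≤ 1 := le_trans hs (min_le_right _ _)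
  have hsδ : |s| < δ := lt_of_le_of_lt (le_trans hs (min_le_left _ _)) (by linarith)
  by_contra hcon
  push_neg at hcon
  have : s ∈ Prod.fst '' S := ⟨(s, w), ⟨abs_le.mp hs1, hcon⟩, rfl⟩
  exact (hδ (by simpa [Real.dist_eq] using hsδ)) this

lemma unif_cont' [CompactSpace M] {X : ℝ → M → M} (hX : IsFlow X) {ε : ℝ} (hε : 0 < ε) :
    ∃ δ : ℝ, 0 < δ ∧ δ ≤ 1/2 ∧ ∀ u u' : ℝ, |u' - u| ≤ δ → ∀ w : M,
      dist (X u' w) (X u w) < ε := by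
  obtain ⟨δ, hδ0, hδ1, hδ⟩ := unif_small' hX hε
  refine ⟨min δ (1/2), by positivity, min_le_right _ _, fun u u' h w => ?_⟩
  have : X u' w = X (u' - u) (X u w) := by
    rw [← hX.2.2]; ring_nf
  rw [this]
  exact hδ _ (le_trans h (min_le_left _ _)) _

lemma mod_helper' [CompactSpace M] {X : ℝ → M → M} (hX : IsFlow X)
    (f₁ f₂ : ℝ → ℝ) (h₁ : ∀ τ τ' : ℝ, |f₁ τ' - f₁ τ| = |τ' - τ|)
    (h₂ : ∀ τ τ' : ℝ, |f₂ τ' - f₂ τ| = |τ' - τ|) (w v : M) {ε : ℝ} (hε : 0 < ε) :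
    ∃ δ : ℝ, 0 < δ ∧ δ ≤ 1/2 ∧ ∀ τ τ' : ℝ, |τ' - τ| ≤ δ →
      |dist (X (f₁ τ') w) (X (f₂ τ') v) - dist (X (f₁ τ) w) (X (f₂ τ) v)| ≤ ε := by
  obtain ⟨δ, hδ0, hδh, hδ⟩ := unif_cont' hX (half_pos hε)
  refine ⟨δ, hδ0, hδh, fun τ τ' h => ?_⟩
  have key := dist_dist_dist_le (X (f₁ τ') w) (X (f₂ τ') v) (X (f₁ τ) w) (X (f₂ τ) v)
  rw [Real.dist_eq] at key
  have e1 : dist (X (f₁ τ') w) (X (f₁ τ) w) < ε/2 := hδ (f₁ τ) (f₁ τ') (by rw [h₁]; exact h) w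
  have e2 : dist (X (f₂ τ') v) (X (f₂ τ) v) < ε/2 := hδ (f₂ τ) (f₂ τ') (by rw [h₂]; exact h) v
  linarith

lemma tendsto_of_blocks' (g : ℝ → ℝ) (hg0 : ∀ τ, 0 ≤ g τ) (hc : Continuous g)
    (hmod : ∀ ε : ℝ, 0 < ε → ∃ δ : ℝ, 0 < δ ∧ δ ≤ 1/2 ∧
      ∀ τ τ' : ℝ, |τ' - τ| ≤ δ → |g τ' - g τ| ≤ ε)
    (hint : Tendsto (fun n : ℕ => ∫ τ in (n : ℝ)..((n:ℝ)+1), g τ) atTop (𝓝 0)) :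
    Tendsto g atTop (𝓝 0) := by
  rw [Metric.tendsto_atTop]
  intro ε hε
  obtain ⟨δ, hδ0, hδh, hδ⟩ := hmod (ε/2) (by positivity)
  rw [Metric.tendsto_atTop] at hint
  obtain ⟨n0, hn0⟩ := hint (δ*ε/4) (by positivity)
  refine ⟨(n0:ℝ)+1, fun τ hτ => ?_⟩
  rw [Real.dist_0_eq_abs, abs_of_nonneg (hg0 τ)]
  by_contra hcon
  push_neg at hcon
  have hτ0 : (0:ℝ) ≤ τ := le_trans (by positivity) hτ
  set n : ℕ := ⌊τ⌋₊ with hn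
  have h1 : (n:ℝ) ≤ τ := Nat.floor_le hτ0
  have h2 : τ < (n:ℝ)+1 := Nat.lt_floor_add_one τ
  have hnn0 : n0 ≤ n := by
    have : n0 + 1 ≤ n := Nat.le_floor (by push_cast; linarith)
    omega
  obtain ⟨c, d, hcd, hnc, hdn, hnear⟩ :
      ∃ c d : ℝ, d = c + δ ∧ (n:ℝ) ≤ c ∧ d ≤ (n:ℝ)+1 ∧ ∀ u ∈ Set.Icc c d, |u - τ| ≤ δ := by
    by_cases hcase : τ ≤ (n:ℝ) + 1/2
    · exact ⟨τ, τ+δ, rfl, h1, by linarith, fun u hu => abs_le.mpr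
        ⟨by linarith [hu.1], by linarith [hu.2]⟩⟩
    · exact ⟨τ-δ, τ, by ring, by linarith, by linarith, fun u hu => abs_le.mpr
        ⟨by linarith [hu.1], by linarith [hu.2]⟩⟩
  have hcd' : c ≤ d := by linarith
  have hlow : ∀ u ∈ Set.Icc c d, ε/2 ≤ g u := by
    intro u hu
    have := hδ τ u (hnear u hu)
    have h' := abs_le.mp this
    linarith [h'.1]
  have hI1 : δ * (ε/2) ≤ ∫ u in c..d, g u := by
    have hmono := intervalIntegral.integral_mono_on (μ := volume) (f := fun _ : ℝ => ε/2) (g := g) hcd'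
      (intervalIntegrable_const) (hc.intervalIntegrable c d) hlow
    rw [intervalIntegral.integral_const, smul_eq_mul] at hmono
    calc δ * (ε/2) = (d - c) * (ε/2) := by rw [hcd]; ring
    _ ≤ _ := hmono
  have hI2 : (∫ u in c..d, g u) ≤ ∫ u in (n:ℝ)..((n:ℝ)+1), g u := by
    refine intervalIntegral.integral_mono_interval (μ := volume) hnc hcd' hdn ?_
      (hc.intervalIntegrable _ _)
    exact Filter.Eventually.of_forall fun u => hg0 u
  have hI3 := hn0 n hnn0
  rw [Real.dist_0_eq_abs] at hI3
  have := le_abs_self (∫ u in (n:ℝ)..((n:ℝ)+1), g u)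
  nlinarith
end AuxGap


lemma psumZ_one' : ∀ n : ℤ, psumZ (fun _ : ℤ => (1:ℝ)) n = (n : ℝ) := by
  intro n
  unfold psumZ
  split
  · next h =>
    simp only [Finset.sum_const, nsmul_eq_mul, mul_one, Finset.card_range]
    exact_mod_cast congrArg (Int.cast : ℤ → ℝ) (Int.toNat_of_nonneg h)
  · next h =>
    push_neg at h
    simp only [Finset.sum_const, nsmul_eq_mul, mul_one, Finset.card_range]
    have h2 : ((-n).toNat : ℤ) = -n := Int.toNat_of_nonneg (by omega)
    have h3 : ((-n).toNat : ℝ) = -(n:ℝ) := by exact_mod_cast h2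
    rw [h3]; ring

/-- under the two-sided limit shadowing property with gap `N`, stable and
unstable sets of points of `Λ` intersect, up to a time shift `K` with `|K| ≤ N`. -/
theorem gap_stable_meets_unstable [CompactSpace M]
    (X : ℝ → M → M) (Λ : Set M) (N : ℝ) (hX : IsFlow X) (hΛ : IsolatedSet X Λ)
    (hN : 0 ≤ N) (hgap : TwoSidedLimitShadowingWithGap X Λ N) :
    ∀ x ∈ Λ, ∀ y ∈ Λ, ∃ K : ℝ, |K| ≤ N ∧
      (stableSet X (X (-K) x) ∩ unstableSet X y).Nonempty := by
  intro x hx y hy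
  have hinv : ∀ t : ℝ, ∀ w ∈ Λ, X t w ∈ Λ := by
    intro t w hw
    rw [← hΛ.1 t]
    exact ⟨w, hw, rfl⟩
  set xs : ℤ → M := fun i => if i < 0 then X (i : ℝ) y else X (i : ℝ) x with hxs
  have hxsΛ : ∀ i, xs i ∈ Λ := by
    intro i
    simp only [hxs]
    split
    · exact hinv _ _ hy
    · exact hinv _ _ hx
  have hstep : ∀ i : ℤ, i ≠ -1 → X 1 (xs i) = xs (i + 1) := by
    intro i hi
    simp only [hxs]
    rcases lt_or_ge i 0 with h | h
    · have hi1 : i + 1 < 0 := by omega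
      rw [if_pos h, if_pos hi1, ← hX.2.2]
      push_cast
      ring_nf
    · have hi1 : ¬ (i + 1 < 0) := by omega
      rw [if_neg (not_lt.mpr h), if_neg hi1, ← hX.2.2]
      push_cast
      ring_nf
  have hpo : TwoSidedLimitPseudoOrbit X xs (fun _ => 1) := by
    refine ⟨fun _ => le_refl 1, ?_⟩
    have h0 : ∀ᶠ i in (cofinite : Filter ℤ),
        (0 : ℝ) = dist (X 1 (xs i)) (xs (i + 1)) := by
      rw [Filter.eventually_cofinite]
      refine Set.Finite.subset (Set.finite_singleton (-1)) ?_
      intro i hi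
      simp only [Set.mem_setOf_eq] at hi
      simp only [Set.mem_singleton_iff]
      by_contra h
      exact hi (by rw [hstep i h, dist_self])
    exact Filter.Tendsto.congr' h0 tendsto_const_nhds
  obtain ⟨z, hzΛ, K, hKN, hsh⟩ := hgap xs (fun _ => 1) hxsΛ hpo
  refine ⟨K, hKN, z, ?_, ?_⟩
  · -- z ∈ stableSet X (X (-K) x)
    set g₁ : ℝ → ℝ := fun τ => dist (X (τ + K) z) (X τ x) with hg₁
    have hg₁c : Continuous g₁ := by
      apply Continuous.dist
      · exact hX.1.comp ((continuous_id.add continuous_const).prodMk continuous_const)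
      · exact hX.1.comp (continuous_id.prodMk continuous_const)
    have hblocks : Tendsto (fun n : ℕ => ∫ τ in (n : ℝ)..((n:ℝ)+1), g₁ τ) atTop (𝓝 0) := by
      have heq : (fun i : ℕ =>
          ∫ τ in psumZ (fun _ => (1:ℝ)) i..psumZ (fun _ => (1:ℝ)) ((i : ℤ) + 1),
            dist (X (τ + K) z) (X (τ - psumZ (fun _ => (1:ℝ)) i) (xs i)))
          = fun n : ℕ => ∫ τ in (n : ℝ)..((n:ℝ)+1), g₁ τ := by
        funext i
        rw [psumZ_one', psumZ_one']
        have hxi : xs (i : ℤ) = X ((i : ℤ) : ℝ) x := by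
          simp only [hxs]
          rw [if_neg (not_lt.mpr (Int.natCast_nonneg i))]
        have hfun : ∀ τ : ℝ, dist (X (τ + K) z) (X (τ - ((i : ℤ) : ℝ)) (xs i)) = g₁ τ := by
          intro τ
          rw [hxi, ← hX.2.2, show τ - ((i:ℤ):ℝ) + ((i:ℤ):ℝ) = τ by ring]
        simp only [hfun]
        congr 1 <;> push_cast <;> ring
      rw [← heq]
      exact hsh.1
    have hg₁mod : ∀ ε : ℝ, 0 < ε → ∃ δ : ℝ, 0 < δ ∧ δ ≤ 1/2 ∧
        ∀ τ τ' : ℝ, |τ' - τ| ≤ δ → |g₁ τ' - g₁ τ| ≤ ε := by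
      intro ε hε
      exact mod_helper' hX (fun τ => τ + K) id
        (fun τ τ' => by rw [show τ' + K - (τ + K) = τ' - τ by ring]) (fun τ τ' => rfl) z x hε
    have hg₁0 : ∀ τ, 0 ≤ g₁ τ := fun τ => dist_nonneg
    have hlim : Tendsto g₁ atTop (𝓝 0) := tendsto_of_blocks' g₁ hg₁0 hg₁c hg₁mod hblocks
    have : (fun s : ℝ => dist (X s (X (-K) x)) (X s z)) = fun s => g₁ (s - K) := by
      funext s
      show dist (X s (X (-K) x)) (X s z) = dist (X (s - K + K) z) (X (s - K) x)
      rw [← hX.2.2, show s + -K = s - K by ring, show s - K + K = s by ring]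
      exact dist_comm _ _
    rw [stableSet, Set.mem_setOf_eq, this]
    exact hlim.comp (tendsto_atTop_add_const_right atTop (-K) tendsto_id)
  · -- z ∈ unstableSet X y
    set g₂ : ℝ → ℝ := fun τ => dist (X τ z) (X τ y) with hg₂
    have hg₂c : Continuous g₂ := by
      apply Continuous.dist
      · exact hX.1.comp (continuous_id.prodMk continuous_const)
      · exact hX.1.comp (continuous_id.prodMk continuous_const)
    have hblocks2 : Tendsto (fun i : ℕ => ∫ τ in (-(i:ℝ))..(-(i:ℝ)+1), g₂ τ) atTop (𝓝 0) := by
      refine Filter.Tendsto.congr' ?_ hsh.2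
      filter_upwards [Filter.eventually_ge_atTop 1] with i hi
      rw [psumZ_one', psumZ_one']
      have hneg : (-(i : ℤ)) < 0 := by
        have : (1:ℤ) ≤ (i:ℤ) := by exact_mod_cast hi
        omega
      have hxi : xs (-(i : ℤ)) = X ((-(i : ℤ) : ℤ) : ℝ) y := by
        simp only [hxs]
        rw [if_pos hneg]
      have hfun : ∀ τ : ℝ, dist (X τ z) (X (τ - ((-(i : ℤ) : ℤ) : ℝ)) (xs (-(i:ℤ)))) = g₂ τ := by
        intro τ
        rw [hxi, ← hX.2.2, show τ - ((-(i:ℤ):ℤ):ℝ) + ((-(i:ℤ):ℤ):ℝ) = τ by ring]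
      simp only [hfun]
      congr 1 <;> push_cast <;> ring
    set g₃ : ℝ → ℝ := fun τ => g₂ (1 - τ) with hg₃
    have hg₃c : Continuous g₃ := hg₂c.comp (continuous_const.sub continuous_id)
    have hblocks3 : Tendsto (fun n : ℕ => ∫ τ in (n : ℝ)..((n:ℝ)+1), g₃ τ) atTop (𝓝 0) := by
      refine Filter.Tendsto.congr ?_ hblocks2
      intro n
      simp only [hg₃]
      rw [intervalIntegral.integral_comp_sub_left g₂ 1]
      congr 1 <;> ring
    have hg₃mod : ∀ ε : ℝ, 0 < ε → ∃ δ : ℝ, 0 < δ ∧ δ ≤ 1/2 ∧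
        ∀ τ τ' : ℝ, |τ' - τ| ≤ δ → |g₃ τ' - g₃ τ| ≤ ε := by
      intro ε hε
      exact mod_helper' hX (fun τ => 1 - τ) (fun τ => 1 - τ)
        (fun τ τ' => by rw [show (1-τ') - (1-τ) = -(τ' - τ) by ring, abs_neg])
        (fun τ τ' => by rw [show (1-τ') - (1-τ) = -(τ' - τ) by ring, abs_neg]) z y hε
    have hlim3 : Tendsto g₃ atTop (𝓝 0) :=
      tendsto_of_blocks' g₃ (fun τ => dist_nonneg) hg₃c hg₃mod hblocks3
    have : (fun s : ℝ => dist (X (-s) y) (X (-s) z)) = fun s => g₃ (1 + s) := by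
      funext s
      show dist (X (-s) y) (X (-s) z) = dist (X (1 - (1 + s)) z) (X (1 - (1 + s)) y)
      rw [show (1:ℝ) - (1 + s) = -s by ring]
      exact dist_comm _ _
    rw [unstableSet, Set.mem_setOf_eq, this]
    exact hlim3.comp (tendsto_atTop_add_const_left atTop 1 tendsto_id)
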